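/- Let (S, ·) be an adequate partial semigroup and let 𝓕 be an adequately partition regular invariant family of finite subsets of S. Then the set P = {p ∈ δS : every A ∈ p contains some F ∈ 𝓕} is a nonempty closed two-sided ideal of δS; in particular K(δS) ⊂ P. -/

import Mathlib

open Set

/-- A partial semigroup: a partially defined associative operation, encoded with
`Option`. Associativity: if either side of `x·(y·z) = (x·y)·z` is defined, so is
the other and they agree. -/
structure PartialSemigroup (S : Type*) where
  op : S → S → Option S
  assoc : ∀ x y z : S,
    (op x y).bind (fun w => op w z) = (op y z).bind (fun w => op x w)

namespace PartialSemigroup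

variable {S : Type*} (P : PartialSemigroup S)

/-- `φ(x) = {y : x·y is defined}`. -/
def phi (x : S) : Set S := {y | (P.op x y).isSome}

/-- `S` is adequate if `⋂_{x ∈ F} φ(x) ≠ ∅` for every finite nonempty `F`. -/
def Adequate : Prop :=
  ∀ F : Finset S, F.Nonempty → (⋂ x ∈ F, P.phi x).Nonempty

/-- `x⁻¹A = {y ∈ φ(x) : x·y ∈ A}`. -/
def invImg (x : S) (A : Set S) : Set S := {y | ∃ z ∈ A, P.op x y = some z}

/-- The sets of the ultrafilter product `p·q = {A : {x : x⁻¹A ∈ q} ∈ p}`. -/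
def mulSets (p q : Ultrafilter S) : Set (Set S) :=
  {A | {x | P.invImg x A ∈ q} ∈ p}

/-- `δS ⊆ βS`: ultrafilters containing every `φ(x)`. -/
def delta : Set (Ultrafilter S) := {p | ∀ x : S, P.phi x ∈ p}

/-- `r` is the product `p·q` in `δS`. -/
def IsProd (p q r : Ultrafilter S) : Prop := ∀ A : Set S, A ∈ r ↔ A ∈ P.mulSets p q

/-- A two-sided ideal of the compact right topological semigroup `δS`. -/
def IsIdeal (I : Set (Ultrafilter S)) : Prop :=
  I ⊆ P.delta ∧ I.Nonempty ∧
    (∀ p ∈ P.delta, ∀ q ∈ I, ∀ r : Ultrafilter S, P.IsProd p q r → r ∈ I) ∧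
    (∀ p ∈ P.delta, ∀ q ∈ I, ∀ r : Ultrafilter S, P.IsProd q p r → r ∈ I)

/-- Membership in the smallest two-sided ideal `K(δS)` (which equals the
intersection of all two-sided ideals). -/
def InSmallestIdeal (p : Ultrafilter S) : Prop :=
  p ∈ P.delta ∧ ∀ I : Set (Ultrafilter S), P.IsIdeal I → p ∈ I

/-- `A` is piecewise syndetic: `A` belongs to some ultrafilter in `K(δS)`. -/
def PiecewiseSyndetic (A : Set S) : Prop :=
  ∃ p : Ultrafilter S, P.InSmallestIdeal p ∧ A ∈ p

/-- `𝓕` is invariant under all defined left and right translations. -/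
def Invariant (𝓕 : Set (Set S)) : Prop :=
  (∀ s : S, ∀ F ∈ 𝓕, (∀ f ∈ F, (P.op s f).isSome) →
      {z | ∃ f ∈ F, P.op s f = some z} ∈ 𝓕) ∧
  (∀ s : S, ∀ F ∈ 𝓕, (∀ f ∈ F, (P.op f s).isSome) →
      {z | ∃ f ∈ F, P.op f s = some z} ∈ 𝓕)

/-- `𝓕` is adequately partition regular: every finite partition (colouring) of
any set `⋂_{x ∈ G} φ(x)` (`G` finite) has a cell containing a member of `𝓕`. -/
def AdequatelyPartitionRegular (𝓕 : Set (Set S)) : Prop :=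
  ∀ G : Finset S, ∀ (r : ℕ) (c : S → Fin r),
    ∃ F ∈ 𝓕, F ⊆ (⋂ x ∈ G, P.phi x) ∧ ∃ i : Fin r, ∀ y ∈ F, c y = i

end PartialSemigroup

section Aux

open PartialSemigroup

variable {S : Type*} (P : PartialSemigroup S)

/-- Products of elements of `δS` stay in `δS`. -/
theorem prod_mem_delta {p q r : Ultrafilter S} (hp : p ∈ P.delta) (hq : q ∈ P.delta)
    (hr : P.IsProd p q r) : r ∈ P.delta := by
  intro x
  rw [hr (P.phi x)]
  refine Filter.mem_of_superset (hp x) (fun s hs => ?_)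
  obtain ⟨w, hw⟩ := Option.isSome_iff_exists.mp hs
  refine Filter.mem_of_superset (hq w) (fun y hy => ?_)
  obtain ⟨u, hu⟩ := Option.isSome_iff_exists.mp hy
  have hassoc := P.assoc x s y
  rw [hw] at hassoc
  simp only [Option.bind_some] at hassoc
  rw [hu] at hassoc
  obtain ⟨v, hv, hzv⟩ : ∃ v, P.op s y = some v ∧ P.op x v = some u := by
    rcases h : P.op s y with _ | v
    · rw [h] at hassoc; simp at hassoc
    · rw [h] at hassoc; exact ⟨v, rfl, hassoc.symm⟩
  exact ⟨v, Option.isSome_iff_exists.mpr ⟨u, hzv⟩, hv⟩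

end Aux

/-- The set `P` of ultrafilters in `δS` all of whose members contain a member of
`𝓕` is a nonempty closed two-sided ideal of `δS`; in particular `K(δS) ⊆ P`. -/


theorem ideal_of_partition_regular_family {S : Type*} (P : PartialSemigroup S)
    (hAd : P.Adequate) (𝓕 : Set (Set S)) (hfin : ∀ F ∈ 𝓕, F.Finite)
    (hinv : P.Invariant 𝓕) (hpr : P.AdequatelyPartitionRegular 𝓕) :
    let Pset : Set (Ultrafilter S) :=
      {p | p ∈ P.delta ∧ ∀ A ∈ p, ∃ F ∈ 𝓕, F ⊆ A}
    Pset.Nonempty ∧ IsClosed Pset ∧ P.IsIdeal Pset ∧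
      ∀ p : Ultrafilter S, P.InSmallestIdeal p → p ∈ Pset := by
  classical
  intro Pset
  -- S is nonempty
  have hS : Nonempty S := by
    by_contra h
    rw [not_nonempty_iff] at h
    obtain ⟨F, -, -, i, -⟩ := hpr ∅ 0 (fun x => (h.false x).elim)
    exact i.elim0
  -- the family of "bad" sets: sets containing no member of 𝓕
  set 𝒢 : Set (Set S) := {A | ¬ ∃ F ∈ 𝓕, F ⊆ A} with h𝒢
  -- key finite-intersection lemma via partition regularity
  have key : ∀ (G : Finset S) (T : Finset (Set S)), (∀ A ∈ T, A ∈ 𝒢) →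
      ((⋂ x ∈ G, P.phi x) ∩ ⋂ A ∈ T, Aᶜ).Nonempty := by
    intro G T hT
    obtain ⟨F, hF𝓕, hFsub, i, hi⟩ := hpr G (Fintype.card ({A // A ∈ T} → Bool))
      (fun y => (Fintype.equivFin ({A // A ∈ T} → Bool)) (fun A => decide (y ∈ A.1)))
    rcases F.eq_empty_or_nonempty with hFe | ⟨f, hf⟩
    · rcases T.eq_empty_or_nonempty with hTe | ⟨A, hA⟩
      · subst hTe
        simp only [Finset.notMem_empty, Set.iInter_of_empty, Set.iInter_univ,
          Set.inter_univ]
        rcases G.eq_empty_or_nonempty with hGe | hGn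
        · subst hGe
          simp
        · exact hAd G hGn
      · exact absurd ⟨F, hF𝓕, hFe ▸ Set.empty_subset A⟩ (hT A hA)
    · refine ⟨f, hFsub hf, ?_⟩
      simp only [Set.mem_iInter, Set.mem_compl_iff]
      intro A hA
      have hbad := hT A hA
      have hex : ∃ g ∈ F, g ∉ A := by
        by_contra hc
        push_neg at hc
        exact hbad ⟨F, hF𝓕, hc⟩
      obtain ⟨g, hg, hgA⟩ := hex
      have hχ : (fun A : {A // A ∈ T} => decide (f ∈ A.1)) =
          fun A => decide (g ∈ A.1) :=
        (Fintype.equivFin _).injective ((hi f hf).trans (hi g hg).symm)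
      intro hfA
      have := congrFun hχ ⟨A, hA⟩
      simp only [hfA, hgA, decide_eq_true_eq, decide_eq_false_iff_not] at this
      simp at this
    -- first: Pset is nonempty
  have hne : Pset.Nonempty := by
    set 𝔅 : Set (Set S) := Set.range P.phi ∪ compl '' 𝒢 with h𝔅
    have hfip : ∀ T : Finset (Set S), (↑T : Set (Set S)) ⊆ 𝔅 →
        (⋂₀ (↑T : Set (Set S))).Nonempty := by
      intro T hT
      set g : Set S → S := fun B => if h : ∃ x, P.phi x = B then h.choose else hS.some
        with hg
      set T1 : Finset (Set S) := T.filter (· ∈ Set.range P.phi) with hT1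
      set T2 : Finset (Set S) := T.filter (· ∉ Set.range P.phi) with hT2
      have hTA : ∀ A ∈ T2.image compl, A ∈ 𝒢 := by
        intro A hA
        simp only [hT2, Finset.mem_image, Finset.mem_filter] at hA
        obtain ⟨B, ⟨hBT, hBr⟩, rfl⟩ := hA
        rcases hT hBT with hB | ⟨C, hC, rfl⟩
        · exact absurd hB hBr
        · rwa [compl_compl]
      obtain ⟨y, hy1, hy2⟩ := key (T1.image g) (T2.image compl) hTA
      refine ⟨y, fun B hB => ?_⟩
      rw [Finset.mem_coe] at hB
      by_cases hBr : B ∈ Set.range P.phi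
      · have hBT1 : B ∈ T1 := Finset.mem_filter.mpr ⟨hB, hBr⟩
        have hBr' : ∃ x, P.phi x = B := hBr
        have hgB : P.phi (g B) = B := by
          simp only [hg]
          rw [dif_pos hBr']
          exact hBr'.choose_spec
        have : y ∈ P.phi (g B) := by
          simp only [Set.mem_iInter] at hy1
          exact hy1 (g B) (Finset.mem_image_of_mem g hBT1)
        rwa [hgB] at this
      · have hBT2 : B ∈ T2 := Finset.mem_filter.mpr ⟨hB, hBr⟩
        simp only [Set.mem_iInter, Set.mem_compl_iff] at hy2
        have := hy2 Bᶜ (Finset.mem_image_of_mem compl hBT2)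
        simpa using this
    obtain ⟨p, hp⟩ := Ultrafilter.exists_ultrafilter_of_finite_inter_nonempty 𝔅 hfip
    have hpδ : p ∈ P.delta := fun x => hp (Or.inl ⟨x, rfl⟩)
    refine ⟨p, hpδ, fun A hA => ?_⟩
    by_contra hc
    have : Aᶜ ∈ p := hp (Or.inr ⟨A, hc, rfl⟩)
    exact Ultrafilter.compl_notMem_iff.mpr hA this
  -- closedness
  have hclosed : IsClosed Pset := by
    have : Pset = (⋂ x : S, {p : Ultrafilter S | P.phi x ∈ p}) ∩
        ⋂ A ∈ 𝒢, {p : Ultrafilter S | A ∈ p}ᶜ := by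
      ext p
      simp only [Set.mem_inter_iff, Set.mem_iInter, Set.mem_compl_iff,
        Set.mem_setOf_eq, Pset]
      constructor
      · rintro ⟨hδ, hmem⟩
        exact ⟨hδ, fun A hA hAp => hA (hmem A hAp)⟩
      · rintro ⟨hδ, hmem⟩
        refine ⟨hδ, fun A hAp => ?_⟩
        by_contra hc
        exact hmem A hc hAp
    rw [this]
    exact (isClosed_iInter fun x => ultrafilter_isClosed_basic _).inter
      (isClosed_iInter fun A => isClosed_iInter fun _ =>
        (ultrafilter_isOpen_basic _).isClosed_compl)
  -- ideal property
  have hideal : P.IsIdeal Pset := by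
    refine ⟨fun p hp => hp.1, hne, ?_, ?_⟩
    · -- left ideal: p·q ∈ Pset for p ∈ δS, q ∈ Pset
      rintro p hp q ⟨hqδ, hq⟩ r hr
      refine ⟨prod_mem_delta P hp hqδ hr, fun A hA => ?_⟩
      rw [hr A] at hA
      obtain ⟨s, hs⟩ := Ultrafilter.nonempty_of_mem hA
      obtain ⟨F, hF𝓕, hF⟩ := hq _ hs
      have hdef : ∀ f ∈ F, (P.op s f).isSome := by
        intro f hfF
        obtain ⟨z, -, hz⟩ := hF hfF
        exact Option.isSome_iff_exists.mpr ⟨z, hz⟩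
      refine ⟨_, hinv.1 s F hF𝓕 hdef, ?_⟩
      rintro z ⟨f, hfF, hz⟩
      obtain ⟨z', hz'A, hz'⟩ := hF hfF
      rw [hz] at hz'
      exact (Option.some_injective _ hz') ▸ hz'A
    · -- right ideal: q·p ∈ Pset for p ∈ δS, q ∈ Pset
      rintro p hp q ⟨hqδ, hq⟩ r hr
      refine ⟨prod_mem_delta P hqδ hp hr, fun A hA => ?_⟩
      rw [hr A] at hA
      obtain ⟨F, hF𝓕, hF⟩ := hq _ hA
      have hmem : (⋂ f ∈ F, P.invImg f A) ∈ p :=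
        (Filter.biInter_mem (hfin F hF𝓕)).mpr fun f hfF => hF hfF
      obtain ⟨t, ht⟩ := Ultrafilter.nonempty_of_mem hmem
      simp only [Set.mem_iInter] at ht
      have hdef : ∀ f ∈ F, (P.op f t).isSome := by
        intro f hfF
        obtain ⟨z, -, hz⟩ := ht f hfF
        exact Option.isSome_iff_exists.mpr ⟨z, hz⟩
      refine ⟨_, hinv.2 t F hF𝓕 hdef, ?_⟩
      rintro z ⟨f, hfF, hz⟩
      obtain ⟨z', hz'A, hz'⟩ := ht f hfF
      rw [hz] at hz'
      exact (Option.some_injective _ hz') ▸ hz'A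
  exact ⟨hne, hclosed, hideal, fun p hp => hp.2 Pset hideal⟩
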